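/- Let N be a positive integer and t < N. The number of compositions of N into m parts whose first part is not 1 and whose last part exceeds t equals C(N - t - 2, m - 1). -/

import Mathlib

namespace Blackjack

/-- Successive differences of a list with respect to a starting value. -/
def diffs : ℕ → List ℕ → List ℕ
  | _, [] => []
  | prev, a :: l => (a - prev) :: diffs a l

@[simp] lemma diffs_length (prev : ℕ) (q : List ℕ) : (diffs prev q).length = q.length := by
  induction q generalizing prev with
  | nil => rfl
  | cons a l ih => simp [diffs, ih]

lemma diffs_pos {prev : ℕ} {q : List ℕ} (h : List.Chain (· < ·) prev q) :
    ∀ x ∈ diffs prev q, 0 < x := by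
  induction q generalizing prev with
  | nil => simp [diffs]
  | cons a l ih =>
    rcases List.chain_cons.1 h with ⟨h1, h2⟩
    intro x hx
    rcases List.mem_cons.1 hx with rfl | hx
    · omega
    · exact ih h2 x hx

lemma diffs_getD (prev : ℕ) (q : List ℕ) (k : ℕ) (hk : k < q.length) :
    (diffs prev q).getD k 0 = q.getD k 0 - (prev :: q).getD k 0 := by
  induction q generalizing prev k with
  | nil => simp at hk
  | cons a l ih =>
    cases k with
    | zero => simp [diffs]
    | succ k => simpa [diffs] using ih a k (by simpa using hk)

lemma diffs_take_sum {prev : ℕ} {q : List ℕ} (h : List.Chain (· < ·) prev q)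
    (k : ℕ) (hk : k ≤ q.length) :
    prev + ((diffs prev q).take k).sum = (prev :: q).getD k 0 := by
  induction q generalizing prev k with
  | nil =>
    have hk0 : k = 0 := by simpa using hk
    subst hk0
    simp [diffs]
  | cons a l ih =>
    rcases List.chain_cons.1 h with ⟨h1, h2⟩
    cases k with
    | zero => simp
    | succ k =>
      have H := ih h2 k (by simpa using hk)
      simp only [diffs, List.take_succ_cons, List.sum_cons, List.getD_cons_succ]
      omega

open Classical in
/-- The inverse map: build a composition of `N` from a finset of cut points. -/
noncomputable def bwd (N : ℕ) (hN : 0 < N) (s : Finset ℕ) : Composition N :=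
  if h : List.Chain (· < ·) 0 (s.sort (· ≤ ·) ++ [N]) then
    { blocks := diffs 0 (s.sort (· ≤ ·) ++ [N])
      blocks_pos := fun hx => diffs_pos h _ hx
      blocks_sum := by
        have H := diffs_take_sum h (s.sort (· ≤ ·) ++ [N]).length le_rfl
        rw [List.length_append, List.length_singleton, List.getD_cons_succ,
          List.getD_append_right _ _ _ _ le_rfl, Nat.sub_self, List.getD_cons_zero] at H
        have htk : (diffs 0 (s.sort (· ≤ ·) ++ [N])).take ((s.sort (· ≤ ·)).length + 1)
            = diffs 0 (s.sort (· ≤ ·) ++ [N]) :=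
          List.take_of_length_le (by
            rw [diffs_length, List.length_append, List.length_singleton])
        rw [htk] at H
        omega }
  else Composition.single N hN

lemma bwd_blocks {N : ℕ} (hN : 0 < N) {s : Finset ℕ}
    (h : List.Chain (· < ·) 0 (s.sort (· ≤ ·) ++ [N])) :
    (bwd N hN s).blocks = diffs 0 (s.sort (· ≤ ·) ++ [N]) := by
  rw [bwd, dif_pos h]

lemma chain_of_subset {N t : ℕ} (ht : t < N) {s : Finset ℕ}
    (hsub : s ⊆ Finset.Icc 2 (N - t - 1)) :
    List.Chain (· < ·) 0 (s.sort (· ≤ ·) ++ [N]) := by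
  have hmem : ∀ x ∈ s.sort (· ≤ ·), 2 ≤ x ∧ x ≤ N - t - 1 := by
    intro x hx
    have := hsub ((Finset.mem_sort _).1 hx)
    simpa [Finset.mem_Icc] using this
  show List.IsChain (· < ·) (0 :: _)
  rw [List.isChain_iff_pairwise]
  refine List.pairwise_cons.2 ⟨?_, ?_⟩
  · intro x hx
    rcases List.mem_append.1 hx with h | h
    · have := (hmem x h).1; omega
    · simp only [List.mem_singleton] at h; omega
  · refine List.pairwise_append.2 ⟨List.sortedLT_iff_pairwise.1 (Finset.sortedLT_sort s), by simp, ?_⟩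
    intro x hx y hy
    simp only [List.mem_singleton] at hy
    subst hy
    have := (hmem x hx).2
    omega

lemma size_lt_size {n : ℕ} (c : Composition n) {i j : ℕ} (hij : i < j) (hj : j ≤ c.length) :
    c.sizeUpTo i < c.sizeUpTo j :=
  lt_of_lt_of_le (c.sizeUpTo_strict_mono (lt_of_lt_of_le hij hj)) (c.monotone_sizeUpTo hij)

end Blackjack

open Blackjack in
/-- Blackjack dealer counting theorem: for `N ≥ 2`, `t < N`, `m ≥ 1`, the number
of compositions of `N` into `m` parts whose first part is not 1 and whose last
part exceeds `t` equals `C(N - t - 2, m - 1)`.  (With `N = w - d` and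
`t = w - s` this is `C(s - d - 2, m - 1)`.) -/
theorem blackjack_count (N t m : ℕ) (hN : 2 ≤ N) (ht : t < N) (hm : 1 ≤ m) :
    (Finset.univ.filter
        (fun c : Composition N => c.length = m ∧ c.blocks.getD 0 0 ≠ 1 ∧
          t < c.blocks.getD (m - 1) 0)).card
      = (N - t - 2).choose (m - 1) := by
  classical
  have hN0 : 0 < N := by omega
  have hcard : (Finset.Icc 2 (N - t - 1)).card = N - t - 2 := by
    rw [Nat.card_Icc]; omega
  rw [← hcard, ← Finset.card_powersetCard]
  -- facts about a composition in the filter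
  have key : ∀ c : Composition N, c.length = m → c.blocks.getD 0 0 ≠ 1 →
      t < c.blocks.getD (m - 1) 0 →
      2 ≤ c.sizeUpTo 1 ∧ c.sizeUpTo (m - 1) ≤ N - t - 1 := by
    intro c hlen h1 h2
    have h0m : 0 < c.length := by omega
    have hb0 : 2 ≤ c.blocks[0] := by
      have hge := c.one_le_blocks' h0m
      have : c.blocks.getD 0 0 = c.blocks[0] := List.getD_eq_getElem _ _ h0m
      omega
    have hs1 : c.sizeUpTo 1 = c.blocks[0] := by
      have := c.sizeUpTo_succ h0m
      simpa using this
    have hm1 : m - 1 < c.length := by omega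
    have hlast : c.sizeUpTo (m - 1) + c.blocks[m - 1] = N := by
      have h := c.sizeUpTo_succ hm1
      have h2' : m - 1 + 1 = m := by omega
      rw [h2'] at h
      have hN' : c.sizeUpTo m = N := c.sizeUpTo_ofLength_le m (by omega)
      omega
    have hgd : c.blocks.getD (m - 1) 0 = c.blocks[m - 1] := List.getD_eq_getElem _ _ hm1
    constructor
    · omega
    · omega
  refine Finset.card_bij'
    (fun c _ => ((List.range (m - 1)).map (fun j => c.sizeUpTo (j + 1))).toFinset)
    (fun s _ => bwd N hN0 s) ?_ ?_ ?_ ?_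
  · -- forward map lands in powersetCard
    intro c hc
    simp only [Finset.mem_filter, Finset.mem_univ, true_and] at hc
    obtain ⟨hlen, h1, h2⟩ := hc
    obtain ⟨hge2, hle⟩ := key c hlen h1 h2
    rw [Finset.mem_powersetCard]
    constructor
    · intro x hx
      simp only [List.mem_toFinset, List.mem_map, List.mem_range] at hx
      obtain ⟨j, hj, rfl⟩ := hx
      rw [Finset.mem_Icc]
      constructor
      · exact le_trans hge2 (c.monotone_sizeUpTo (by omega))
      · exact le_trans (c.monotone_sizeUpTo (by omega : j + 1 ≤ m - 1)) hle
    · have hnodup : ((List.range (m - 1)).map (fun j => c.sizeUpTo (j + 1))).Nodup := by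
        refine List.Nodup.map_on ?_ List.nodup_range
        intro a ha b hb hab
        simp only [List.mem_range] at ha hb
        by_contra hne
        rcases Nat.lt_or_ge a b with h | h
        · exact absurd hab (ne_of_lt (size_lt_size c (by omega) (by omega)))
        · have : b < a := by omega
          exact absurd hab.symm (ne_of_lt (size_lt_size c (by omega) (by omega)))
      rw [List.toFinset_card_of_nodup hnodup]
      simp
  · -- backward map lands in the filter
    intro s hs
    rw [Finset.mem_powersetCard] at hs
    obtain ⟨hsub, hscard⟩ := hs
    have hchain := chain_of_subset ht hsub
    have hblocks := bwd_blocks hN0 hchain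
    have hPlen : (s.sort (· ≤ ·)).length = m - 1 := by
      rw [Finset.length_sort, hscard]
    have hqlen : (s.sort (· ≤ ·) ++ [N]).length = m := by
      rw [List.length_append, List.length_singleton, hPlen]; omega
    have hlen : (bwd N hN0 s).length = m := by
      rw [Composition.length, hblocks, diffs_length, hqlen]
    simp only [Finset.mem_filter, Finset.mem_univ, true_and]
    refine ⟨hlen, ?_, ?_⟩
    · -- first block is not 1
      rw [hblocks, diffs_getD 0 _ 0 (by omega), List.getD_cons_zero]
      rcases Nat.eq_or_lt_of_le hm with hm1 | hm2
      · -- m = 1 : sort is empty, first block is N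
        have hP0 : (s.sort (· ≤ ·)) = [] := by
          rw [← List.length_eq_zero_iff]; omega
        rw [hP0]
        simp
        omega
      · -- m ≥ 2 : first block comes from an element of s
        have hP0 : 0 < (s.sort (· ≤ ·)).length := by omega
        rw [List.getD_append _ _ _ _ hP0, List.getD_eq_getElem _ _ hP0]
        have hmem : (s.sort (· ≤ ·))[0] ∈ s := by
          rw [← Finset.mem_sort (· ≤ ·)]
          exact List.getElem_mem _
        have := Finset.mem_Icc.1 (hsub hmem)
        omega
    · -- last block exceeds t
      rw [hblocks, diffs_getD 0 _ (m - 1) (by omega)]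
      have hlastN : (s.sort (· ≤ ·) ++ [N]).getD (m - 1) 0 = N := by
        rw [List.getD_append_right _ _ _ _ (by omega), hPlen]
        simp [Nat.sub_self]
      rw [hlastN]
      rcases Nat.eq_or_lt_of_le hm with hm1 | hm2
      · have : m - 1 = 0 := by omega
        rw [this]
        simp
        omega
      · -- (0 :: q).getD (m-1) = q.getD (m-2) = element of s
        have hm2' : m - 1 = (m - 2) + 1 := by omega
        rw [hm2', List.getD_cons_succ]
        have hP2 : m - 2 < (s.sort (· ≤ ·)).length := by omega
        rw [List.getD_append _ _ _ _ hP2, List.getD_eq_getElem _ _ hP2]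
        have hmem : (s.sort (· ≤ ·))[m - 2] ∈ s := by
          rw [← Finset.mem_sort (· ≤ ·)]
          exact List.getElem_mem _
        have := Finset.mem_Icc.1 (hsub hmem)
        omega
  · -- left inverse
    intro c hc
    simp only [Finset.mem_filter, Finset.mem_univ, true_and] at hc
    obtain ⟨hlen, h1, h2⟩ := hc
    obtain ⟨hge2, hle⟩ := key c hlen h1 h2
    set L := (List.range (m - 1)).map (fun j => c.sizeUpTo (j + 1)) with hL
    have hLpair : L.Pairwise (· < ·) := by
      rw [hL, List.pairwise_map]
      refine List.pairwise_lt_range.imp_of_mem ?_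
      intro a b ha hb hab
      simp only [List.mem_range] at ha hb
      exact size_lt_size c (by omega) (by omega)
    have hLnodup : L.Nodup := hLpair.imp ne_of_lt
    have hLsorted : L.Pairwise (· ≤ ·) := hLpair.imp le_of_lt
    have hsub : L.toFinset ⊆ Finset.Icc 2 (N - t - 1) := by
      intro x hx
      simp only [hL, List.mem_toFinset, List.mem_map, List.mem_range] at hx
      obtain ⟨j, hj, rfl⟩ := hx
      rw [Finset.mem_Icc]
      exact ⟨le_trans hge2 (c.monotone_sizeUpTo (by omega)),
        le_trans (c.monotone_sizeUpTo (by omega : j + 1 ≤ m - 1)) hle⟩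
    have hsort : L.toFinset.sort (· ≤ ·) = L := (List.toFinset_sort _ hLnodup).2 hLsorted
    have hchain : List.Chain (· < ·) 0 (L.toFinset.sort (· ≤ ·) ++ [N]) :=
      chain_of_subset ht hsub
    have hblocks := bwd_blocks hN0 hchain
    rw [hsort] at hblocks
    have hLlen : L.length = m - 1 := by simp [hL]
    have hqlen : (L ++ [N]).length = m := by
      rw [List.length_append, List.length_singleton, hLlen]; omega
    -- q values are the partial sums
    have hq : ∀ k, k < m → (L ++ [N]).getD k 0 = c.sizeUpTo (k + 1) := by
      intro k hk
      rcases Nat.lt_or_ge k (m - 1) with h | h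
      · rw [List.getD_append _ _ _ _ (by omega)]
        rw [List.getD_eq_getElem _ _ (by omega)]
        simp [hL]
      · have hk1 : k = m - 1 := by omega
        subst hk1
        rw [List.getD_append_right _ _ _ _ (by omega), hLlen]
        simp only [Nat.sub_self, List.getD_cons_zero]
        have : m - 1 + 1 = m := by omega
        rw [this, ← hlen, c.sizeUpTo_length]
    have hq0 : ∀ k, k < m → ((0 : ℕ) :: (L ++ [N])).getD k 0 = c.sizeUpTo k := by
      intro k hk
      cases k with
      | zero => simp
      | succ k =>
        rw [List.getD_cons_succ]
        exact hq k (by omega)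
    apply Composition.ext
    rw [hblocks]
    apply List.ext_getElem
    · rw [diffs_length, hqlen, ← hlen]
    · intro k hk1 hk2
      have hkm : k < m := by rwa [diffs_length, hqlen] at hk1
      rw [← List.getD_eq_getElem _ 0 hk1, ← List.getD_eq_getElem _ 0 hk2]
      rw [diffs_getD _ _ _ (by omega), hq k hkm, hq0 k hkm]
      have hkl : k < c.length := by omega
      have hsucc := c.sizeUpTo_succ hkl
      rw [List.getD_eq_getElem _ _ hkl]
      omega
  · -- right inverse
    intro s hs
    rw [Finset.mem_powersetCard] at hs
    obtain ⟨hsub, hscard⟩ := hs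
    have hchain := chain_of_subset ht hsub
    have hblocks := bwd_blocks hN0 hchain
    have hPlen : (s.sort (· ≤ ·)).length = m - 1 := by
      rw [Finset.length_sort, hscard]
    have hsize : ∀ j, j < m - 1 → (bwd N hN0 s).sizeUpTo (j + 1) = (s.sort (· ≤ ·)).getD j 0 := by
      intro j hj
      have H := diffs_take_sum hchain (j + 1) (by rw [List.length_append, List.length_singleton, hPlen]; omega)
      rw [List.getD_cons_succ, List.getD_append _ _ _ _ (by omega)] at H
      rw [Composition.sizeUpTo, hblocks]
      omega
    ext x
    simp only [List.mem_toFinset, List.mem_map, List.mem_range]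
    constructor
    · rintro ⟨j, hj, rfl⟩
      rw [hsize j hj, List.getD_eq_getElem _ _ (by omega)]
      rw [← Finset.mem_sort (· ≤ ·)]
      exact List.getElem_mem _
    · intro hx
      have hxP : x ∈ s.sort (· ≤ ·) := (Finset.mem_sort (· ≤ ·)).2 hx
      obtain ⟨j, hj, rfl⟩ := List.mem_iff_getElem.1 hxP
      refine ⟨j, by omega, ?_⟩
      rw [hsize j (by omega), List.getD_eq_getElem _ _ hj]
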